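/- The second nilpotent product Z *₂ Z is isomorphic to the integral Heisenberg group Heis(Z). -/

import Mathlib

open Monoid
open scoped commutatorElement

/-- The normal subgroup of the free product `A ∗ B` generated by commutators
`⁅x, ⁅a, b⁆⁆` with `x ∈ A ∗ B`, `a ∈ A`, `b ∈ B`. -/
def nil2Rel (A B : Type*) [Group A] [Group B] : Subgroup (Coprod A B) :=
  Subgroup.normalClosure
    {z | ∃ (x : Coprod A B) (a : A) (b : B), z = ⁅x, ⁅(Coprod.inl a : Coprod A B), Coprod.inr b⁆⁆}

instance (A B : Type*) [Group A] [Group B] : (nil2Rel A B).Normal :=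
  Subgroup.normalClosure_normal

/-- The second nilpotent product `A *₂ B = (A ∗ B)/[A ∗ B, [A,B]]`. -/
def Nil2 (A B : Type*) [Group A] [Group B] : Type _ :=
  Coprod A B ⧸ nil2Rel A B

instance (A B : Type*) [Group A] [Group B] : Group (Nil2 A B) :=
  QuotientGroup.Quotient.group _

/-- Canonical map `A → A *₂ B`. -/
def Nil2.inl {A B : Type*} [Group A] [Group B] : A →* Nil2 A B :=
  (QuotientGroup.mk' (nil2Rel A B)).comp Coprod.inl

/-- Canonical map `B → A *₂ B`. -/
def Nil2.inr {A B : Type*} [Group A] [Group B] : B →* Nil2 A B :=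
  (QuotientGroup.mk' (nil2Rel A B)).comp Coprod.inr

/-- The subgroup `[A,B]⁽²⁾` of `A *₂ B` generated by the commutators `⁅a, b⁆`. -/
def commSubgroup (A B : Type*) [Group A] [Group B] : Subgroup (Nil2 A B) :=
  Subgroup.closure {z | ∃ (a : A) (b : B), z = ⁅(Nil2.inl a : Nil2 A B), Nil2.inr b⁆}

/-- The Heisenberg group of upper unitriangular `3 × 3` matrices over `R`, as a subgroup
of the units of the matrix ring. -/
def Heis (R : Type*) [CommRing R] : Subgroup (Matrix (Fin 3) (Fin 3) R)ˣ where
  carrier := {M | ∃ a b c : R, (M : Matrix (Fin 3) (Fin 3) R) = !![1, a, c; 0, 1, b; 0, 0, 1]}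
  one_mem' := ⟨0, 0, 0, by simp [Matrix.one_fin_three]⟩
  mul_mem' := by
    rintro M N ⟨a, b, c, hM⟩ ⟨a', b', c', hN⟩
    refine ⟨a + a', b + b', c + c' + a * b', ?_⟩
    rw [Units.val_mul, hM, hN, Matrix.mul_fin_three]
    congr 1 <;> ring
  inv_mem' := by
    rintro M ⟨a, b, c, hM⟩
    refine ⟨-a, -b, -c + a * b, ?_⟩
    have h : (M : Matrix (Fin 3) (Fin 3) R) *
        !![1, -a, -c + a * b; 0, 1, -b; 0, 0, 1] = 1 := by
      rw [hM, Matrix.mul_fin_three, Matrix.one_fin_three]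
      congr 1 <;> ring
    calc (↑M⁻¹ : Matrix (Fin 3) (Fin 3) R)
        = ↑M⁻¹ * ((M : Matrix (Fin 3) (Fin 3) R) *
            !![1, -a, -c + a * b; 0, 1, -b; 0, 0, 1]) := by rw [h, mul_one]
      _ = !![1, -a, -c + a * b; 0, 1, -b; 0, 0, 1] := by
            rw [← mul_assoc, Units.inv_mul, one_mul]

section Stmt15Aux

open Multiplicative Monoid

/-! ### Heisenberg side -/

/-- The basic unitriangular matrix. -/
def hmat (a b c : ℤ) : Matrix (Fin 3) (Fin 3) ℤ := !![1, a, c; 0, 1, b; 0, 0, 1]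

lemma hmat_mul (a b c a' b' c' : ℤ) :
    hmat a b c * hmat a' b' c' = hmat (a + a') (b + b') (c + c' + a * b') := by
  rw [hmat, hmat, hmat, Matrix.mul_fin_three]
  congr 1 <;> ring

lemma hmat_one : hmat 0 0 0 = 1 := by
  rw [hmat, Matrix.one_fin_three]

/-- The corresponding unit. -/
def hU (a b c : ℤ) : (Matrix (Fin 3) (Fin 3) ℤ)ˣ where
  val := hmat a b c
  inv := hmat (-a) (-b) (a * b - c)
  val_inv := by
    rw [hmat_mul, show a + -a = 0 by ring, show b + -b = 0 by ring,
      show c + (a * b - c) + a * -b = 0 by ring, hmat_one]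
  inv_val := by
    rw [hmat_mul, show -a + a = 0 by ring, show -b + b = 0 by ring,
      show a * b - c + c + -a * b = 0 by ring, hmat_one]

/-- The corresponding element of the Heisenberg group. -/
def hE (a b c : ℤ) : Heis ℤ := ⟨hU a b c, ⟨a, b, c, rfl⟩⟩

lemma hE_congr {a b c a' b' c' : ℤ} (h1 : a = a') (h2 : b = b') (h3 : c = c') :
    hE a b c = hE a' b' c' := by rw [h1, h2, h3]

lemma hE_mul (a b c a' b' c' : ℤ) :
    hE a b c * hE a' b' c' = hE (a + a') (b + b') (c + c' + a * b') :=
  Subtype.ext (Units.ext (hmat_mul a b c a' b' c'))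

lemma hE_one : hE 0 0 0 = 1 :=
  Subtype.ext (Units.ext hmat_one)

lemma hE_inv (a b c : ℤ) : (hE a b c)⁻¹ = hE (-a) (-b) (a * b - c) :=
  Subtype.ext (Units.ext rfl)

lemma heis_eq_hE (g : Heis ℤ) : ∃ a b c : ℤ, g = hE a b c := by
  obtain ⟨u, a, b, c, hu⟩ := g
  exact ⟨a, b, c, Subtype.ext (Units.ext hu)⟩

lemma hE_comm (a b c a' b' c' : ℤ) :
    ⁅hE a b c, hE a' b' c'⁆ = hE 0 0 (a * b' - a' * b) := by
  rw [commutatorElement_def, hE_inv, hE_inv, hE_mul, hE_mul, hE_mul]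
  exact hE_congr (by ring) (by ring) (by ring)

lemma heis_central (g : Heis ℤ) (c : ℤ) : ⁅g, hE 0 0 c⁆ = 1 := by
  obtain ⟨a, b, c', rfl⟩ := heis_eq_hE g
  rw [hE_comm]
  exact (hE_congr rfl rfl (by ring)).trans hE_one

lemma hE_inj {a b c a' b' c' : ℤ} (h : hE a b c = hE a' b' c') :
    a = a' ∧ b = b' ∧ c = c' := by
  have h1 := congrArg (fun g : Heis ℤ => ((g : (Matrix (Fin 3) (Fin 3) ℤ)ˣ) : Matrix (Fin 3) (Fin 3) ℤ) 0 1) h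
  have h2 := congrArg (fun g : Heis ℤ => ((g : (Matrix (Fin 3) (Fin 3) ℤ)ˣ) : Matrix (Fin 3) (Fin 3) ℤ) 1 2) h
  have h3 := congrArg (fun g : Heis ℤ => ((g : (Matrix (Fin 3) (Fin 3) ℤ)ˣ) : Matrix (Fin 3) (Fin 3) ℤ) 0 2) h
  simp only [hE, hU, hmat] at h1 h2 h3
  refine ⟨?_, ?_, ?_⟩
  · simpa using h1
  · simpa using h2
  · simpa using h3

/-- The homomorphism `ℤ → Heis ℤ` hitting the `a`-coordinate. -/
def φA : Multiplicative ℤ →* Heis ℤ where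
  toFun n := hE n.toAdd 0 0
  map_one' := hE_one
  map_mul' m n := by
    rw [hE_mul]; exact hE_congr (by simp) (by ring) (by ring)

/-- The homomorphism `ℤ → Heis ℤ` hitting the `b`-coordinate. -/
def φB : Multiplicative ℤ →* Heis ℤ where
  toFun n := hE 0 n.toAdd 0
  map_one' := hE_one
  map_mul' m n := by
    rw [hE_mul]; exact hE_congr (by ring) (by simp) (by ring)

/-- The homomorphism `ℤ → Heis ℤ` hitting the `c`-coordinate. -/
def φC : Multiplicative ℤ →* Heis ℤ where
  toFun n := hE 0 0 n.toAdd
  map_one' := hE_one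
  map_mul' m n := by
    rw [hE_mul]; exact hE_congr (by ring) (by ring) (by simp)

lemma ofAdd_eq_pow (a : ℤ) : (ofAdd a : Multiplicative ℤ) = (ofAdd 1 : Multiplicative ℤ) ^ a := by
  rw [← ofAdd_zsmul]; norm_num

lemma hE_a_zpow (a : ℤ) : hE 1 0 0 ^ a = hE a 0 0 := by
  have h : hE a 0 0 = φA (ofAdd 1 ^ a) := by rw [← ofAdd_eq_pow]; rfl
  rw [h, map_zpow]; rfl

lemma hE_b_zpow (b : ℤ) : hE 0 1 0 ^ b = hE 0 b 0 := by
  have h : hE 0 b 0 = φB (ofAdd 1 ^ b) := by rw [← ofAdd_eq_pow]; rfl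
  rw [h, map_zpow]; rfl

lemma hE_c_zpow (c : ℤ) : hE 0 0 1 ^ c = hE 0 0 c := by
  have h : hE 0 0 c = φC (ofAdd 1 ^ c) := by rw [← ofAdd_eq_pow]; rfl
  rw [h, map_zpow]; rfl

/-! ### General commutator lemmas -/

lemma comm_mul_left' {G : Type*} [Group G] (x y h : G) :
    ⁅x * y, h⁆ = x * ⁅y, h⁆ * x⁻¹ * ⁅x, h⁆ := by
  simp only [commutatorElement_def]; group

lemma comm_inv_left' {G : Type*} [Group G] (x h : G) :
    ⁅x⁻¹, h⁆ = x⁻¹ * ⁅x, h⁆⁻¹ * x := by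
  simp only [commutatorElement_def]; group

lemma central_comm_zpow_left {G : Type*} [Group G] (g h : G)
    (hc : ∀ x : G, Commute x ⁅g, h⁆) (n : ℤ) : ⁅g ^ n, h⁆ = ⁅g, h⁆ ^ n := by
  induction n using Int.induction_on with
  | zero => simp [commutatorElement_def]
  | succ k ih =>
    rw [zpow_add_one, comm_mul_left', ih, (hc (g ^ (k : ℤ))).eq]
    group
  | pred k ih =>
    rw [show g ^ (-(k : ℤ) - 1) = g⁻¹ * g ^ (-(k : ℤ)) by
        rw [← zpow_neg_one, ← zpow_add]; ring_nf,
      comm_mul_left', ih, comm_inv_left',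
      ((hc g⁻¹).zpow_right (-(k : ℤ))).eq, ((hc g⁻¹).inv_right).eq,
      mul_inv_cancel_right, inv_mul_cancel_right, ← zpow_sub_one]

lemma central_comm_zpow_right {G : Type*} [Group G] (g h : G)
    (hc : ∀ x : G, Commute x ⁅g, h⁆) (n : ℤ) : ⁅g, h ^ n⁆ = ⁅g, h⁆ ^ n := by
  have hc' : ∀ x : G, Commute x ⁅h, g⁆ := fun x => by
    rw [← commutatorElement_inv]; exact (hc x).inv_right
  rw [← commutatorElement_inv, central_comm_zpow_left h g hc' n, ← commutatorElement_inv,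
    inv_zpow, inv_inv]

lemma mul_eq_comm_mul {G : Type*} [Group G] (x y : G) : x * y = ⁅x, y⁆ * (y * x) := by
  simp only [commutatorElement_def]; group

/-! ### The homomorphism from the coproduct -/

/-- The homomorphism from the free product. -/
def φ : Coprod (Multiplicative ℤ) (Multiplicative ℤ) →* Heis ℤ := Coprod.lift φA φB

lemma nil2Rel_le_ker : nil2Rel (Multiplicative ℤ) (Multiplicative ℤ) ≤ φ.ker := by
  refine Subgroup.normalClosure_le_normal ?_
  rintro z ⟨x, a, b, rfl⟩
  rw [SetLike.mem_coe, MonoidHom.mem_ker, map_commutatorElement, map_commutatorElement]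
  have h1 : φ (Coprod.inl a) = hE a.toAdd 0 0 := rfl
  have h2 : φ (Coprod.inr b) = hE 0 b.toAdd 0 := rfl
  rw [h1, h2, hE_comm]
  exact heis_central _ _

/-- The induced homomorphism `Nil2 → Heis`. -/
def φbar : Nil2 (Multiplicative ℤ) (Multiplicative ℤ) →* Heis ℤ :=
  QuotientGroup.lift _ φ nil2Rel_le_ker

/-! ### Nil2 side -/

local notation "N2" => Nil2 (Multiplicative ℤ) (Multiplicative ℤ)

/-- Generator coming from the left factor. -/
def uu : N2 := Nil2.inl (ofAdd 1)
/-- Generator coming from the right factor. -/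
def vv : N2 := Nil2.inr (ofAdd 1)
/-- The central commutator. -/
def zz : N2 := ⁅uu, vv⁆

lemma inl_eq_upow (a : ℤ) : (Nil2.inl (ofAdd a) : N2) = uu ^ a := by
  rw [ofAdd_eq_pow, map_zpow]; rfl

lemma inr_eq_vpow (b : ℤ) : (Nil2.inr (ofAdd b) : N2) = vv ^ b := by
  rw [ofAdd_eq_pow, map_zpow]; rfl

/-- The quotient map into `Nil2`. -/
def mkN : Coprod (Multiplicative ℤ) (Multiplicative ℤ) →* N2 :=
  QuotientGroup.mk' (nil2Rel (Multiplicative ℤ) (Multiplicative ℤ))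

lemma mkN_surj : Function.Surjective mkN :=
  QuotientGroup.mk'_surjective (nil2Rel (Multiplicative ℤ) (Multiplicative ℤ))

lemma nil2_central (x : N2) (a b : Multiplicative ℤ) :
    ⁅x, ⁅(Nil2.inl a : N2), (Nil2.inr b : N2)⁆⁆ = 1 := by
  obtain ⟨x', rfl⟩ := mkN_surj x
  have E : mkN ⁅x', ⁅(Coprod.inl a : Coprod (Multiplicative ℤ) (Multiplicative ℤ)), Coprod.inr b⁆⁆
      = ⁅mkN x', ⁅(Nil2.inl a : N2), (Nil2.inr b : N2)⁆⁆ := by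
    rw [map_commutatorElement, map_commutatorElement]; rfl
  rw [← E]
  exact (QuotientGroup.eq_one_iff _).mpr
    (Subgroup.subset_normalClosure ⟨x', a, b, rfl⟩)

lemma comm_pow_central (m n : ℤ) (x : N2) : Commute x ⁅uu ^ m, vv ^ n⁆ := by
  rw [show uu ^ m = (Nil2.inl (ofAdd m) : N2) from (inl_eq_upow m).symm,
    show vv ^ n = (Nil2.inr (ofAdd n) : N2) from (inr_eq_vpow n).symm]
  exact commutatorElement_eq_one_iff_commute.mp (nil2_central x _ _)

lemma zz_central (x : N2) : Commute x zz := by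
  have := comm_pow_central 1 1 x
  simpa [zz, zpow_one] using this

lemma comm_pow (m n : ℤ) : ⁅uu ^ m, vv ^ n⁆ = zz ^ (m * n) := by
  have hc : ∀ x : N2, Commute x ⁅uu, vv ^ n⁆ := fun x => by
    have := comm_pow_central 1 n x
    simpa [zpow_one] using this
  have h1 : ⁅uu ^ m, vv ^ n⁆ = ⁅uu, vv ^ n⁆ ^ m := by
    have hc' : ∀ x : N2, Commute x ⁅uu, vv ^ n⁆ := hc
    exact central_comm_zpow_left uu (vv ^ n) hc' m
  have h2 : ⁅uu, vv ^ n⁆ = zz ^ n :=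
    central_comm_zpow_right uu vv (fun x => zz_central x) n
  rw [h1, h2, ← zpow_mul, mul_comm n m]

lemma vpow_mul_upow (B a : ℤ) : vv ^ B * uu ^ a = uu ^ a * vv ^ B * zz ^ (-(a * B)) := by
  have h := mul_eq_comm_mul (vv ^ B) (uu ^ a)
  have hcomm : ⁅vv ^ B, uu ^ a⁆ = zz ^ (-(a * B)) := by
    rw [← commutatorElement_inv, comm_pow, ← zpow_neg]
  rw [h, hcomm]
  exact ((zz_central (uu ^ a * vv ^ B)).zpow_right (-(a * B))).eq.symm

lemma nil2_form (x : N2) : ∃ a b c : ℤ, x = uu ^ a * vv ^ b * zz ^ c := by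
  obtain ⟨y, rfl⟩ := mkN_surj x
  induction y using Coprod.induction_on' with
  | one => exact ⟨0, 0, 0, by simp⟩
  | inl_mul m w ih =>
    obtain ⟨a, b, c, hw⟩ := ih
    refine ⟨m.toAdd + a, b, c, ?_⟩
    rw [map_mul, hw,
      show mkN (Coprod.inl m) = uu ^ m.toAdd from by
        rw [show m = ofAdd m.toAdd from rfl]; exact inl_eq_upow _]
    group
  | inr_mul n w ih =>
    obtain ⟨a, b, c, hw⟩ := ih
    refine ⟨a, n.toAdd + b, c - a * n.toAdd, ?_⟩
    rw [map_mul, hw,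
      show mkN (Coprod.inr n) = vv ^ n.toAdd from by
        rw [show n = ofAdd n.toAdd from rfl]; exact inr_eq_vpow _]
    calc vv ^ n.toAdd * (uu ^ a * vv ^ b * zz ^ c)
        = vv ^ n.toAdd * uu ^ a * (vv ^ b * zz ^ c) := by group
      _ = uu ^ a * vv ^ n.toAdd * zz ^ (-(a * n.toAdd)) * (vv ^ b * zz ^ c) := by
          rw [vpow_mul_upow]
      _ = uu ^ a * vv ^ n.toAdd * (zz ^ (-(a * n.toAdd)) * vv ^ b) * zz ^ c := by group
      _ = uu ^ a * vv ^ n.toAdd * (vv ^ b * zz ^ (-(a * n.toAdd))) * zz ^ c := by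
          rw [((zz_central (vv ^ b)).zpow_right (-(a * n.toAdd))).symm.eq]
      _ = uu ^ a * vv ^ (n.toAdd + b) * zz ^ (c - a * n.toAdd) := by group

lemma φbar_uu : φbar uu = hE 1 0 0 := rfl
lemma φbar_vv : φbar vv = hE 0 1 0 := rfl

lemma φbar_zz : φbar zz = hE 0 0 1 := by
  rw [zz, map_commutatorElement, φbar_uu, φbar_vv, hE_comm]
  exact hE_congr rfl rfl (by ring)

lemma φbar_form (a b c : ℤ) :
    φbar (uu ^ a * vv ^ b * zz ^ c) = hE a b (a * b + c) := by
  rw [map_mul, map_mul, map_zpow, map_zpow, map_zpow, φbar_uu, φbar_vv, φbar_zz,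
    hE_a_zpow, hE_b_zpow, hE_c_zpow, hE_mul, hE_mul]
  exact hE_congr (by ring) (by ring) (by ring)

lemma φbar_bijective : Function.Bijective φbar := by
  constructor
  · intro x y h
    obtain ⟨a, b, c, rfl⟩ := nil2_form x
    obtain ⟨a', b', c', rfl⟩ := nil2_form y
    rw [φbar_form, φbar_form] at h
    obtain ⟨e1, e2, e3⟩ := hE_inj h
    subst e1; subst e2
    have : c = c' := by linarith
    rw [this]
  · intro g
    obtain ⟨a, b, c, rfl⟩ := heis_eq_hE g
    exact ⟨uu ^ a * vv ^ b * zz ^ (c - a * b),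
      (φbar_form a b (c - a * b)).trans (hE_congr rfl rfl (by ring))⟩

end Stmt15Aux


/-- `ℤ *₂ ℤ` is isomorphic to the integral Heisenberg group. -/
theorem stmt15 :
    Nonempty (Nil2 (Multiplicative ℤ) (Multiplicative ℤ) ≃* Heis ℤ) := by
  exact ⟨MulEquiv.ofBijective φbar φbar_bijective⟩
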